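/- Let |ψ⟩ be a unit vector in (ℂ²)^{⊗n₁}, and define |ψ_otp⟩ = (1/2) Σ_{a,b ∈ {0,1}} ((X^a Z^b)^{⊗n₁} |ψ⟩) ⊗ |abab⟩ ∈ (ℂ²)^{⊗(n₁+4)}. Then |ψ_otp⟩ is a unit vector and for every single qubit index j ∈ [n₁+4], the reduced density matrix Tr_{\overline{j}}(|ψ_otp⟩⟨ψ_otp|) equals I/2. -/

import Mathlib

open Matrix BigOperators

/-- Pauli `X`. -/
def pauliX : Matrix (Fin 2) (Fin 2) ℂ := !![0, 1; 1, 0]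

/-- Pauli `Z`. -/
def pauliZ : Matrix (Fin 2) (Fin 2) ℂ := !![1, 0; 0, -1]

/-- The one-time-pad operator `X^a Z^b` on one qubit. -/
noncomputable def XZ (a b : Fin 2) : Matrix (Fin 2) (Fin 2) ℂ :=
  pauliX ^ (a : ℕ) * pauliZ ^ (b : ℕ)

/-- The key string `|abab⟩` on the 4 key qubits. -/
def keyString (a b : Fin 2) : Fin 4 → Fin 2 := ![a, b, a, b]

/-- The one-time-padded proof state
`|ψ_otp⟩ = (1/2) Σ_{a,b} ((X^a Z^b)^{⊗n₁} |ψ⟩) ⊗ |abab⟩` on `n₁ + 4` qubits, where the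
first `n₁` qubits carry the padded proof and the last 4 qubits carry the key. -/
noncomputable def psiOtp (n₁ : ℕ) (ψ : (Fin n₁ → Fin 2) → ℂ) :
    (Fin (n₁ + 4) → Fin 2) → ℂ :=
  fun v => (1/2 : ℂ) * ∑ a : Fin 2, ∑ b : Fin 2,
    (if ∀ k : Fin 4, v (Fin.natAdd n₁ k) = keyString a b k then (1 : ℂ) else 0) *
    ∑ z : Fin n₁ → Fin 2,
      (∏ i : Fin n₁, XZ a b (v (Fin.castAdd 4 i)) (z i)) * ψ z

/-- The single-qubit reduced density matrix of a pure state `φ` on qubit `j`. -/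
noncomputable def rdm1 {m : ℕ} (φ : (Fin m → Fin 2) → ℂ) (j : Fin m) :
    Matrix (Fin 2) (Fin 2) ℂ :=
  Matrix.of fun p q => ∑ z : Fin m → Fin 2,
    if z j = p then φ z * star (φ (Function.update z j q)) else 0

/-! ### Auxiliary material -/

noncomputable def Ssgn (b t : Fin 2) : ℂ := if b = 1 ∧ t = 1 then -1 else 1

lemma Ssgn_mul_self (b t : Fin 2) : Ssgn b t * Ssgn b t = 1 := by
  unfold Ssgn; split <;> ring

lemma conj_Ssgn (b t : Fin 2) : (starRingEnd ℂ) (Ssgn b t) = Ssgn b t := by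
  unfold Ssgn; split <;> simp

lemma norm_Ssgn (b t : Fin 2) : ‖Ssgn b t‖ = 1 := by
  unfold Ssgn; split <;> simp

lemma XZ_apply (a b p q : Fin 2) : XZ a b p q = if q = p + a then Ssgn b q else 0 := by
  fin_cases a <;> fin_cases b <;> fin_cases p <;> fin_cases q <;>
    simp [XZ, pauliX, pauliZ, Ssgn, Matrix.mul_apply, Fin.sum_univ_two, pow_succ]

lemma innerSumXZ {n₁ : ℕ} (ψ : (Fin n₁ → Fin 2) → ℂ) (a b : Fin 2) (w : Fin n₁ → Fin 2) :
    ∑ z : Fin n₁ → Fin 2, (∏ i : Fin n₁, XZ a b (w i) (z i)) * ψ z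
      = (∏ i : Fin n₁, Ssgn b (w i + a)) * ψ (fun i => w i + a) := by
  have h1 : ∀ z : Fin n₁ → Fin 2, (∏ i : Fin n₁, XZ a b (w i) (z i))
      = if z = (fun i => w i + a) then (∏ i : Fin n₁, Ssgn b (z i)) else 0 := by
    intro z
    by_cases hz : z = fun i => w i + a
    · subst hz; simp [XZ_apply]
    · obtain ⟨i, hi⟩ : ∃ i, z i ≠ w i + a := by
        by_contra h; push_neg at h; exact hz (funext h)
      rw [if_neg hz]
      refine Finset.prod_eq_zero (Finset.mem_univ i) ?_
      rw [XZ_apply]; simp [hi]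
  simp_rw [h1, ite_mul, zero_mul]
  rw [Finset.sum_ite_eq' Finset.univ (fun i => w i + a)
    (fun z => (∏ i : Fin n₁, Ssgn b (z i)) * ψ z)]
  simp

lemma key_indicator (a b : Fin 2) (k : Fin 4 → Fin 2) :
    (if ∀ kk : Fin 4, k (kk) = keyString a b kk then (1:ℂ) else 0)
      = (if a = k 0 then 1 else 0) * ((if b = k 1 then 1 else 0) *
          (if k 2 = k 0 ∧ k 3 = k 1 then 1 else 0)) := by
  have hiff : (∀ kk : Fin 4, k kk = keyString a b kk) ↔
      (a = k 0 ∧ b = k 1 ∧ (k 2 = k 0 ∧ k 3 = k 1)) := by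
    constructor
    · intro h
      have h0 := h 0; have h1 := h 1; have h2 := h 2; have h3 := h 3
      simp [keyString] at h0 h1 h2 h3
      exact ⟨h0.symm, h1.symm, by rw [h2, h0], by rw [h3, h1]⟩
    · rintro ⟨h0, h1, h2, h3⟩ kk
      fin_cases kk <;> simp [keyString] <;> omega
  simp only [hiff]
  clear hiff
  split_ifs <;> simp_all

lemma psiOtp_append {n₁ : ℕ} (ψ : (Fin n₁ → Fin 2) → ℂ) (w : Fin n₁ → Fin 2)
    (k : Fin 4 → Fin 2) :
    psiOtp n₁ ψ (Fin.append w k)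
      = (if k 2 = k 0 ∧ k 3 = k 1 then (1:ℂ) else 0) *
        ((1/2 : ℂ) * (∏ i : Fin n₁, Ssgn (k 1) (w i + k 0)) * ψ (fun i => w i + k 0)) := by
  unfold psiOtp
  simp only [Fin.append_right, Fin.append_left, innerSumXZ, key_indicator]
  simp only [boole_mul, mul_ite, mul_zero, ite_mul, zero_mul, one_mul]
  by_cases hc : k 2 = k 0 ∧ k 3 = k 1
  · simp only [hc, and_self, if_true, Finset.sum_ite_eq' Finset.univ, Finset.mem_univ]
    ring
  · simp [hc]

lemma castAdd_ne_natAdd {n₁ : ℕ} (i : Fin n₁) (x1 : Fin 4) :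
    Fin.natAdd n₁ x1 ≠ Fin.castAdd 4 i := by
  simp only [Fin.ne_iff_vne, Fin.coe_natAdd, Fin.coe_castAdd]
  omega

lemma update_append_left {n₁ : ℕ} (w : Fin n₁ → Fin 2) (k : Fin 4 → Fin 2)
    (i : Fin n₁) (q : Fin 2) :
    Function.update (Fin.append w k) (Fin.castAdd 4 i) q
      = Fin.append (Function.update w i q) k := by
  funext x
  refine Fin.addCases (fun x0 => ?_) (fun x1 => ?_) x
  · rcases eq_or_ne x0 i with rfl | h
    · simp [Fin.append_left]
    · rw [Function.update_of_ne (by simpa using h), Fin.append_left, Fin.append_left,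
        Function.update_of_ne h]
  · rw [Function.update_of_ne (castAdd_ne_natAdd i x1), Fin.append_right, Fin.append_right]

lemma update_append_right {n₁ : ℕ} (w : Fin n₁ → Fin 2) (k : Fin 4 → Fin 2)
    (kk : Fin 4) (q : Fin 2) :
    Function.update (Fin.append w k) (Fin.natAdd n₁ kk) q
      = Fin.append w (Function.update k kk q) := by
  funext x
  refine Fin.addCases (fun x0 => ?_) (fun x1 => ?_) x
  · rw [Function.update_of_ne (castAdd_ne_natAdd x0 kk).symm, Fin.append_left, Fin.append_left]
  · rcases eq_or_ne x1 kk with rfl | h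
    · simp [Fin.append_right]
    · rw [Function.update_of_ne
        (by simp only [Fin.ne_iff_vne, Fin.coe_natAdd]; simpa [Fin.ne_iff_vne] using h),
        Fin.append_right, Fin.append_right, Function.update_of_ne h]

def quadEquiv : (Fin 2 × Fin 2 × Fin 2 × Fin 2) ≃ (Fin 4 → Fin 2) where
  toFun x := ![x.1, x.2.1, x.2.2.1, x.2.2.2]
  invFun k := (k 0, k 1, k 2, k 3)
  left_inv := by rintro ⟨a,b,c,d⟩; rfl
  right_inv := by intro k; funext m; fin_cases m <;> rfl

lemma sum_quad {M : Type*} [AddCommMonoid M] (g : (Fin 4 → Fin 2) → M) :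
    ∑ k : Fin 4 → Fin 2, g k
      = ∑ a : Fin 2, ∑ b : Fin 2, ∑ c : Fin 2, ∑ d : Fin 2, g ![a,b,c,d] := by
  rw [← Fintype.sum_equiv quadEquiv (fun x => g ![x.1, x.2.1, x.2.2.1, x.2.2.2]) g
    (fun x => rfl)]
  rw [Fintype.sum_prod_type]
  simp_rw [Fintype.sum_prod_type]

lemma sum_shift {n₁ : ℕ} {M : Type*} [AddCommMonoid M] (f : (Fin n₁ → Fin 2) → M) (c : Fin 2) :
    ∑ w : Fin n₁ → Fin 2, f (fun i => w i + c) = ∑ w : Fin n₁ → Fin 2, f w :=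
  Fintype.sum_equiv (Equiv.addRight (fun _ => c : Fin n₁ → Fin 2)) _ _ (fun _ => rfl)

lemma sum_append {n₁ : ℕ} {M : Type*} [AddCommMonoid M] (f : (Fin (n₁ + 4) → Fin 2) → M) :
    ∑ v : Fin (n₁ + 4) → Fin 2, f v
      = ∑ w : Fin n₁ → Fin 2, ∑ k : Fin 4 → Fin 2, f (Fin.append w k) := by
  rw [← Fintype.sum_equiv (Fin.appendEquiv n₁ 4) (fun p => f (Fin.append p.1 p.2)) f
    (fun p => rfl)]
  rw [Fintype.sum_prod_type]

lemma update_add {n₁ : ℕ} (w : Fin n₁ → Fin 2) (i : Fin n₁) (q c : Fin 2) :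
    (fun m => (Function.update w i q) m + c)
      = Function.update (fun m => w m + c) i (q + c) := by
  funext m
  rcases eq_or_ne m i with rfl | h
  · simp
  · simp [Function.update_of_ne h]

lemma trace_one {n₁ : ℕ} (ψ : (Fin n₁ → Fin 2) → ℂ)
    (hψ : ∑ z : Fin n₁ → Fin 2, ‖ψ z‖ ^ 2 = 1) :
    ∑ z : Fin n₁ → Fin 2, ψ z * (starRingEnd ℂ) (ψ z) = 1 := by
  have h : ∀ z, ψ z * (starRingEnd ℂ) (ψ z) = ((‖ψ z‖^2 : ℝ) : ℂ) := by
    intro z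
    rw [Complex.mul_conj]
    norm_cast
    rw [Complex.sq_norm]
  simp_rw [h]
  rw [← Complex.ofReal_sum, hψ, Complex.ofReal_one]

lemma norm_sq_psiOtp_append {n₁ : ℕ} (ψ : (Fin n₁ → Fin 2) → ℂ) (w : Fin n₁ → Fin 2)
    (k : Fin 4 → Fin 2) :
    ‖psiOtp n₁ ψ (Fin.append w k)‖ ^ 2
      = if k 2 = k 0 ∧ k 3 = k 1 then (1/4) * ‖ψ (fun i => w i + k 0)‖ ^ 2 else 0 := by
  rw [psiOtp_append]
  split_ifs with hc
  · rw [one_mul, norm_mul, norm_mul, norm_prod]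
    simp only [norm_Ssgn, Finset.prod_const_one]
    norm_num; ring
  · simp

lemma sign_pair {n₁ : ℕ} (b a p q : Fin 2) (i : Fin n₁) (w : Fin n₁ → Fin 2)
    (hw : w i = p) :
    (∏ m, Ssgn b (w m + a)) * (∏ m, Ssgn b (Function.update w i q m + a))
      = Ssgn b (p + a) * Ssgn b (q + a) := by
  rw [← Finset.prod_mul_distrib]
  have h : ∀ m, Ssgn b (w m + a) * Ssgn b (Function.update w i q m + a)
      = if m = i then Ssgn b (p + a) * Ssgn b (q + a) else 1 := by
    intro m
    rcases eq_or_ne m i with rfl | h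
    · simp [hw]
    · rw [Function.update_of_ne h, Ssgn_mul_self, if_neg h]
  simp_rw [h]
  rw [Finset.prod_ite_eq' Finset.univ i (fun _ => Ssgn b (p + a) * Ssgn b (q + a))]
  simp

@[simp] lemma vec4_0 (a b c d : Fin 2) : ![a,b,c,d] 0 = a := rfl
@[simp] lemma vec4_1 (a b c d : Fin 2) : ![a,b,c,d] 1 = b := rfl
@[simp] lemma vec4_2 (a b c d : Fin 2) : ![a,b,c,d] 2 = c := rfl
@[simp] lemma vec4_3 (a b c d : Fin 2) : ![a,b,c,d] 3 = d := rfl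

lemma star_psi_part {n₁ : ℕ} (b c : Fin 2) (u : Fin n₁ → Fin 2) (x : ℂ) :
    star ((1/2 : ℂ) * (∏ m : Fin n₁, Ssgn b (u m + c)) * x)
      = (1/2 : ℂ) * (∏ m : Fin n₁, Ssgn b (u m + c)) * star x := by
  rw [star_mul', star_mul']
  rw [show star ((1/2 : ℂ)) = (1/2 : ℂ) from by norm_num,
    show star (∏ m : Fin n₁, Ssgn b (u m + c)) = ∏ m : Fin n₁, Ssgn b (u m + c) from by
      show (starRingEnd ℂ) _ = _
      rw [map_prod]
      exact Finset.prod_congr rfl fun m _ => conj_Ssgn _ _]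


/-- For a unit vector `|ψ⟩` on `n₁` qubits, the one-time-padded state
`|ψ_otp⟩` is a unit vector and every single-qubit reduced density matrix equals `I/2`. -/
theorem psiOtp_locally_maximally_mixed (n₁ : ℕ) (ψ : (Fin n₁ → Fin 2) → ℂ)
    (hψ : ∑ z : Fin n₁ → Fin 2, ‖ψ z‖ ^ 2 = 1) :
    (∑ v : Fin (n₁ + 4) → Fin 2, ‖psiOtp n₁ ψ v‖ ^ 2 = 1) ∧
    (∀ j : Fin (n₁ + 4),
        rdm1 (psiOtp n₁ ψ) j = (1/2 : ℂ) • (1 : Matrix (Fin 2) (Fin 2) ℂ)) := by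
  have htr : ∑ z : Fin n₁ → Fin 2, ψ z * star (ψ z) = 1 := trace_one ψ hψ
  constructor
  · -- normalisation
    rw [sum_append (fun v => ‖psiOtp n₁ ψ v‖ ^ 2)]
    simp_rw [norm_sq_psiOtp_append, sum_quad, Fin.sum_univ_two]
    simp only [Matrix.cons_val_zero, Matrix.cons_val_one, Matrix.head_cons]
    norm_num
    have h0 : ∑ x : Fin n₁ → Fin 2, ‖ψ fun i => x i‖ ^ 2 = 1 := by
      simpa using hψ
    have h1 : ∑ x : Fin n₁ → Fin 2, ‖ψ fun i => x i + 1‖ ^ 2 = 1 := by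
      have := sum_shift (fun u => ‖ψ u‖ ^ 2) 1
      simpa using this.trans hψ
    rw [Finset.sum_add_distrib, Finset.sum_add_distrib, Finset.sum_add_distrib]
    simp_rw [← Finset.mul_sum]
    rw [h0, h1]
    norm_num
  · intro j
    have fin2_cases : ∀ t : Fin 2, t = 0 ∨ t = 1 := by decide
    have fin4_cases : ∀ t : Fin 4, t = 0 ∨ t = 1 ∨ t = 2 ∨ t = 3 := by decide
    induction j using Fin.addCases with
    | left i =>
      -- data qubit
      have hdiag : ∀ t : Fin 2, rdm1 ψ i t t
          = ∑ z : Fin n₁ → Fin 2, (if z i = t then ψ z * star (ψ z) else 0) := by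
        intro t
        show (∑ z : Fin n₁ → Fin 2, if z i = t then ψ z * star (ψ (Function.update z i t)) else 0)
          = _
        refine Finset.sum_congr rfl (fun z _ => ?_)
        split_ifs with h
        · rw [show Function.update z i t = z from by rw [← h]; exact Function.update_eq_self i z]
        · rfl
      have htr2 : rdm1 ψ i 0 0 + rdm1 ψ i 1 1 = 1 := by
        rw [hdiag 0, hdiag 1, ← Finset.sum_add_distrib, ← htr]
        refine Finset.sum_congr rfl (fun z _ => ?_)
        rcases fin2_cases (z i) with h | h <;> simp [h]
      ext p q
      show (∑ v : Fin (n₁+4) → Fin 2, if v (Fin.castAdd 4 i) = p then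
          psiOtp n₁ ψ v * star (psiOtp n₁ ψ (Function.update v (Fin.castAdd 4 i) q)) else 0)
        = ((1/2 : ℂ) • (1 : Matrix (Fin 2) (Fin 2) ℂ)) p q
      rw [sum_append (fun v => if v (Fin.castAdd 4 i) = p then
          psiOtp n₁ ψ v * star (psiOtp n₁ ψ (Function.update v (Fin.castAdd 4 i) q)) else 0)]
      simp only [Fin.append_left, update_append_left]
      rw [Finset.sum_comm]
      have hk : ∀ k : Fin 4 → Fin 2,
          (∑ w : Fin n₁ → Fin 2, if w i = p then
            psiOtp n₁ ψ (Fin.append w k) *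
              star (psiOtp n₁ ψ (Fin.append (Function.update w i q) k)) else 0)
          = (if k 2 = k 0 ∧ k 3 = k 1 then 1 else 0) *
              ((1/4 : ℂ) * (Ssgn (k 1) (p + k 0) * Ssgn (k 1) (q + k 0)) *
                rdm1 ψ i (p + k 0) (q + k 0)) := by
        intro k
        have hterm : ∀ w : Fin n₁ → Fin 2,
            (if w i = p then psiOtp n₁ ψ (Fin.append w k) *
              star (psiOtp n₁ ψ (Fin.append (Function.update w i q) k)) else 0)
            = (if k 2 = k 0 ∧ k 3 = k 1 then 1 else 0) *
              ((1/4 : ℂ) * (Ssgn (k 1) (p + k 0) * Ssgn (k 1) (q + k 0)) *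
                (if w i = p then ψ (fun m => w m + k 0) *
                  star (ψ (Function.update (fun m => w m + k 0) i (q + k 0)))
                 else 0)) := by
          intro w
          by_cases hw : w i = p
          · rw [if_pos hw, if_pos hw, psiOtp_append, psiOtp_append]
            by_cases hc : k 2 = k 0 ∧ k 3 = k 1
            · rw [if_pos hc, one_mul, one_mul,
                show (fun m => Function.update w i q m + k 0)
                  = Function.update (fun m => w m + k 0) i (q + k 0) from update_add w i q (k 0),
                star_psi_part, ← sign_pair (k 1) (k 0) p q i w hw]
              ring
            · simp [hc]
          · simp [hw]
        simp_rw [hterm, ← Finset.mul_sum]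
        congr 2
        show _ = (∑ u : Fin n₁ → Fin 2, if u i = p + k 0 then
            ψ u * star (ψ (Function.update u i (q + k 0))) else 0)
        rw [← sum_shift (fun u => if u i = p + k 0 then
            ψ u * star (ψ (Function.update u i (q + k 0))) else 0) (k 0)]
        refine Finset.sum_congr rfl (fun w _ => ?_)
        simp only [add_left_inj]
      simp_rw [hk]
      rw [sum_quad]
      simp only [Fin.sum_univ_two, Matrix.smul_apply, Matrix.one_apply, smul_eq_mul,
        vec4_0, vec4_1, vec4_2, vec4_3]
      rcases fin2_cases p with rfl | rfl <;> rcases fin2_cases q with rfl | rfl <;>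
        simp only [Fin.isValue, show ((0:Fin 2) = 0) = True from by simp,
          show ((1:Fin 2) = 0) = False from by simp, show ((0:Fin 2) = 1) = False from by simp,
          show ((1:Fin 2) = 1) = True from by simp, show (0+0 : Fin 2) = 0 from rfl,
          show (0+1 : Fin 2) = 1 from rfl, show (1+0 : Fin 2) = 1 from rfl,
          show (1+1 : Fin 2) = 0 from rfl, and_self, and_true, true_and, false_and, and_false,
          if_true, if_false, one_mul, zero_mul, mul_zero, mul_one,
          show Ssgn 0 0 = 1 from by simp [Ssgn], show Ssgn 0 1 = 1 from by simp [Ssgn],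
          show Ssgn 1 0 = 1 from by simp [Ssgn], show Ssgn 1 1 = -1 from by simp [Ssgn]] <;>
      first
        | linear_combination (1/2 : ℂ) * htr2
        | ring
    | right kk =>
      ext p q
      show (∑ v : Fin (n₁+4) → Fin 2, if v (Fin.natAdd n₁ kk) = p then
          psiOtp n₁ ψ v * star (psiOtp n₁ ψ (Function.update v (Fin.natAdd n₁ kk) q)) else 0)
        = ((1/2 : ℂ) • (1 : Matrix (Fin 2) (Fin 2) ℂ)) p q
      rw [sum_append (fun v => if v (Fin.natAdd n₁ kk) = p then
          psiOtp n₁ ψ v * star (psiOtp n₁ ψ (Function.update v (Fin.natAdd n₁ kk) q)) else 0)]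
      simp only [Fin.append_right, update_append_right]
      by_cases hpq : p = q
      · subst hpq
        have hterm : ∀ (w : Fin n₁ → Fin 2) (k : Fin 4 → Fin 2),
            (if k kk = p then psiOtp n₁ ψ (Fin.append w k) *
              star (psiOtp n₁ ψ (Fin.append w (Function.update k kk p))) else 0)
            = (if k kk = p then 1 else 0) * ((if k 2 = k 0 ∧ k 3 = k 1 then 1 else 0) *
                ((1/4 : ℂ) * (ψ (fun m => w m + k 0) * star (ψ (fun m => w m + k 0))))) := by
          intro w k
          by_cases hk : k kk = p
          · rw [if_pos hk, if_pos hk, one_mul,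
              show Function.update k kk p = k from by
                rw [← hk]; exact Function.update_eq_self kk k,
              psiOtp_append]
            by_cases hc : k 2 = k 0 ∧ k 3 = k 1
            · rw [if_pos hc, one_mul, one_mul, star_psi_part]
              have hP : (∏ m : Fin n₁, Ssgn (k 1) (w m + k 0)) *
                  (∏ m : Fin n₁, Ssgn (k 1) (w m + k 0)) = (1:ℂ) := by
                rw [← Finset.prod_mul_distrib]
                exact Finset.prod_eq_one fun m _ => Ssgn_mul_self _ _
              linear_combination (ψ (fun m => w m + k 0) *
                star (ψ (fun m => w m + k 0)) / 4) * hP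
            · simp [hc]
          · simp [hk]
        simp_rw [hterm]
        rw [Finset.sum_comm]
        have hin : ∀ k : Fin 4 → Fin 2,
            (∑ w : Fin n₁ → Fin 2, (if k kk = p then (1:ℂ) else 0) *
              ((if k 2 = k 0 ∧ k 3 = k 1 then (1:ℂ) else 0) *
                ((1/4 : ℂ) * (ψ (fun m => w m + k 0) * star (ψ (fun m => w m + k 0))))))
            = (if k kk = p then (1:ℂ) else 0) *
                ((if k 2 = k 0 ∧ k 3 = k 1 then (1:ℂ) else 0) * (1/4 : ℂ)) := by
          intro k
          rw [← Finset.mul_sum]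
          simp_rw [← Finset.mul_sum]
          rw [show (∑ w : Fin n₁ → Fin 2, ψ (fun m => w m + k 0) *
                star (ψ (fun m => w m + k 0)))
              = 1 from (sum_shift (fun u => ψ u * star (ψ u)) (k 0)).trans htr]
          ring
        simp_rw [hin]
        rw [sum_quad]
        rcases fin4_cases kk with rfl | rfl | rfl | rfl <;> rcases fin2_cases p with rfl | rfl <;>
          simp only [Fin.sum_univ_two, Matrix.smul_apply, Matrix.one_apply, smul_eq_mul,
            vec4_0, vec4_1, vec4_2, vec4_3] <;>
          norm_num
      · have hrhs : ((1/2 : ℂ) • (1 : Matrix (Fin 2) (Fin 2) ℂ)) p q = 0 := by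
          simp [Matrix.one_apply, hpq]
        rw [hrhs]
        refine Finset.sum_eq_zero fun w _ => Finset.sum_eq_zero fun k _ => ?_
        split_ifs with hk
        · rw [psiOtp_append, psiOtp_append]
          by_cases hc : k 2 = k 0 ∧ k 3 = k 1
          · have hc' : ¬(Function.update k kk q 2 = Function.update k kk q 0 ∧
                Function.update k kk q 3 = Function.update k kk q 1) := by
              rcases fin4_cases kk with rfl | rfl | rfl | rfl <;>
                simp_all [Function.update_apply] <;>
                exact fun h => hpq h.symm
            rw [if_neg hc']
            simp
          · rw [if_neg hc]
            simp
        · rfl
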